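/- arXiv:2004.03078 — 8 statements merged into one kernel-verified Lean document; each statement's English description precedes it below -/
import Mathlib

section
/- Let n ≥ 1, let τ > 0, let ρ : [0,τ] → Mₙ(ℂ) be a continuously differentiable family of positive definite density matrices with derivative ρ̇ₜ, let F be a nonempty compact set of positive definite density matrices on ℂⁿ, define M(ϱ) := min_{σ∈F} S(ϱ‖σ), and let σ_τ^▼ ∈ F attain this minimum for ρ_τ. Set ΔM := M(ρ_τ) − M(ρ₀) and ΔS := S(ρ_τ) − S(ρ₀). If ΔM + ΔS ≤ 0, then |ΔM + ΔS| ≤ ∫₀^τ |Tr[ρ̇ₜ · log σ_τ^▼]| dt; equivalently τ ≥ T̃_M(ρ₀,ρ_τ) := |ΔM + ΔS| / ⟨|Tr[ρ̇ₜ log σ_τ^▼]|⟩ₜ, where ⟨f⟩ₜ := (1/τ)∫₀^τ f(t) dt. -/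
open Matrix MeasureTheory intervalIntegral Filter
open scoped ComplexOrder

attribute [local instance] Matrix.normedAddCommGroup Matrix.normedSpace

/-- Functional-calculus logarithm of a Hermitian matrix (junk value `0` otherwise):
for `A = U diag(eigenvalues) U†` it is `U diag(log eigenvalues) U†`. -/
noncomputable def matLog {n : ℕ} (A : Matrix (Fin n) (Fin n) ℂ) :
    Matrix (Fin n) (Fin n) ℂ :=
  if hA : A.IsHermitian then
    (hA.eigenvectorUnitary : Matrix (Fin n) (Fin n) ℂ) *
      Matrix.diagonal (fun i => (Real.log (hA.eigenvalues i) : ℂ)) *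
      (hA.eigenvectorUnitary : Matrix (Fin n) (Fin n) ℂ)ᴴ
  else 0

/-- Quantum relative entropy `S(ρ‖σ) = Tr[ρ (log ρ - log σ)]`. -/
noncomputable def relEnt {n : ℕ} (ρ σ : Matrix (Fin n) (Fin n) ℂ) : ℝ :=
  ((ρ * (matLog ρ - matLog σ)).trace).re

/-- Von Neumann entropy `S(ρ) = -Tr[ρ log ρ]`. -/
noncomputable def vnEnt {n : ℕ} (ρ : Matrix (Fin n) (Fin n) ℂ) : ℝ :=
  -((ρ * matLog ρ).trace).re

/-- A positive definite density matrix: positive definite with unit trace. -/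
def IsPDDensity {n : ℕ} (ρ : Matrix (Fin n) (Fin n) ℂ) : Prop :=
  ρ.PosDef ∧ ρ.trace = 1

-- diag entries of PSD matrix have nonneg re
lemma psd_diag_re_nonneg {n : ℕ} {Q : Matrix (Fin n) (Fin n) ℂ} (hQ : Q.PosSemidef)
    (i : Fin n) : 0 ≤ (Q i i).re := by
  have := hQ.re_dotProduct_nonneg (Pi.single i 1)
  simpa [dotProduct, mulVec, Pi.single_apply, Finset.mul_sum] using this

-- trace = sum of eigenvalues
lemma trace_eq_sum_eig {n : ℕ} {A : Matrix (Fin n) (Fin n) ℂ} (hA : A.IsHermitian) :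
    A.trace = ∑ i, (hA.eigenvalues i : ℂ) := by
  conv_lhs => rw [hA.spectral_theorem]
  rw [Unitary.conjStarAlgAut_apply, Matrix.trace_mul_cycle, Unitary.coe_star_mul_self, one_mul]
  simp [Matrix.trace_diagonal]

-- eigenvalues of PD density are ≤ 1
lemma eig_le_one {n : ℕ} {σ : Matrix (Fin n) (Fin n) ℂ} (hσ : IsPDDensity σ) (i : Fin n) :
    (hσ.1.isHermitian).eigenvalues i ≤ 1 := by
  have hs : ∑ j, (hσ.1.isHermitian).eigenvalues j = 1 := by
    have h := trace_eq_sum_eig hσ.1.isHermitian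
    exact_mod_cast h.symm.trans hσ.2
  have hpos := hσ.1.eigenvalues_pos
  calc (hσ.1.isHermitian).eigenvalues i
      ≤ ∑ j, (hσ.1.isHermitian).eigenvalues j :=
        Finset.single_le_sum (fun j _ => (hpos j).le) (Finset.mem_univ i)
    _ = 1 := hs

-- key nonpositivity lemma
lemma trace_mul_matLog_nonpos {n : ℕ} {P σ : Matrix (Fin n) (Fin n) ℂ}
    (hP : P.PosSemidef) (hσ : IsPDDensity σ) :
    ((P * matLog σ).trace).re ≤ 0 := by
  have hH := hσ.1.isHermitian
  rw [matLog, dif_pos hH]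
  set U : Matrix (Fin n) (Fin n) ℂ := (hH.eigenvectorUnitary : Matrix (Fin n) (Fin n) ℂ)
  set d : Fin n → ℂ := fun i => (Real.log (hH.eigenvalues i) : ℂ)
  have hQ : (Uᴴ * P * U).PosSemidef := hP.conjTranspose_mul_mul_same U
  have htr : (P * (U * Matrix.diagonal d * Uᴴ)).trace = ((Uᴴ * P * U) * Matrix.diagonal d).trace := by
    rw [← mul_assoc, ← mul_assoc, Matrix.trace_mul_cycle, ← mul_assoc]
  rw [htr]
  have : ((Uᴴ * P * U) * Matrix.diagonal d).trace = ∑ i, (Uᴴ * P * U) i i * d i := by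
    simp [Matrix.trace, Matrix.diag, Matrix.mul_diagonal]
  rw [this, Complex.re_sum]
  apply Finset.sum_nonpos
  intro i _
  have h1 : 0 ≤ ((Uᴴ * P * U) i i).re := psd_diag_re_nonneg hQ i
  have h2 : Real.log (hH.eigenvalues i) ≤ 0 :=
    Real.log_nonpos (hσ.1.eigenvalues_pos i).le (eig_le_one hσ i)
  have : ((Uᴴ * P * U) i i * d i).re = ((Uᴴ * P * U) i i).re * Real.log (hH.eigenvalues i) := by
    simp [d, Complex.mul_re]
  rw [this]
  exact mul_nonpos_of_nonneg_of_nonpos h1 h2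

/-- **Corollary 1 of the paper, ΔM + ΔS ≤ 0 case (resource speed limit with total
entropy variation in the numerator).** With `στ` the closest free state to `ρ_τ`:
if `ΔM + ΔS ≤ 0` then `|ΔM + ΔS| ≤ ∫₀^τ |Tr[ρ̇ₜ log στ]| dt`, i.e.
`τ ≥ T̃_M(ρ₀, ρ_τ)`. -/
theorem resource_speed_limit_of_nonpos
    {n : ℕ} (hn : 1 ≤ n) {τ : ℝ} (hτ : 0 < τ)
    (ρ ρ' : ℝ → Matrix (Fin n) (Fin n) ℂ)
    (hρ : ∀ t ∈ Set.Icc (0 : ℝ) τ, IsPDDensity (ρ t))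
    (hderiv : ∀ t ∈ Set.Icc (0 : ℝ) τ, HasDerivAt ρ (ρ' t) t)
    (hcont : ContinuousOn ρ' (Set.Icc (0 : ℝ) τ))
    (F : Set (Matrix (Fin n) (Fin n) ℂ))
    (hFne : F.Nonempty) (hFcpt : IsCompact F) (hF : ∀ σ ∈ F, IsPDDensity σ)
    (στ : Matrix (Fin n) (Fin n) ℂ) (hστF : στ ∈ F)
    (hστmin : ∀ σ ∈ F, relEnt (ρ τ) στ ≤ relEnt (ρ τ) σ)
    (ΔM ΔS : ℝ)
    (hΔM : ΔM = sInf ((fun σ => relEnt (ρ τ) σ) '' F)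
              - sInf ((fun σ => relEnt (ρ 0) σ) '' F))
    (hΔS : ΔS = vnEnt (ρ τ) - vnEnt (ρ 0))
    (hneg : ΔM + ΔS ≤ 0) :
    |ΔM + ΔS| ≤ (∫ t in (0 : ℝ)..τ, |((ρ' t * matLog στ).trace).re|) ∧
    τ ≥ |ΔM + ΔS| / ((1 / τ) * ∫ t in (0 : ℝ)..τ, |((ρ' t * matLog στ).trace).re|) := by
  have h0mem : (0:ℝ) ∈ Set.Icc (0:ℝ) τ := ⟨le_refl 0, hτ.le⟩
  have hτmem : τ ∈ Set.Icc (0:ℝ) τ := ⟨hτ.le, le_refl τ⟩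
  have hsplit : ∀ (ϱ σ : Matrix (Fin n) (Fin n) ℂ),
      relEnt ϱ σ = -vnEnt ϱ - ((ϱ * matLog σ).trace).re := by
    intro ϱ σ
    simp only [relEnt, vnEnt, mul_sub, Matrix.trace_sub, Complex.sub_re, neg_neg]
  have h1 : sInf ((fun σ => relEnt (ρ τ) σ) '' F) = relEnt (ρ τ) στ :=
    IsLeast.csInf_eq ⟨⟨στ, hστF, rfl⟩, by rintro x ⟨σ, hσ, rfl⟩; exact hστmin σ hσ⟩
  have hbdd : BddBelow ((fun σ => relEnt (ρ 0) σ) '' F) := by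
    refine ⟨-vnEnt (ρ 0), ?_⟩
    rintro x ⟨σ, hσ, rfl⟩
    have := trace_mul_matLog_nonpos (hρ 0 h0mem).1.posSemidef (hF σ hσ)
    show -vnEnt (ρ 0) ≤ relEnt (ρ 0) σ
    rw [hsplit]
    linarith
  have h2 : sInf ((fun σ => relEnt (ρ 0) σ) '' F) ≤ relEnt (ρ 0) στ :=
    csInf_le hbdd ⟨στ, hστF, rfl⟩
  let L : Matrix (Fin n) (Fin n) ℂ →ₗ[ℝ] ℝ :=
    Complex.reLm.comp ((Matrix.traceLinearMap (Fin n) ℝ ℂ).comp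
      ((LinearMap.mulRight ℂ (matLog στ)).restrictScalars ℝ))
  let Lc := LinearMap.toContinuousLinearMap L
  have key : ∀ t ∈ Set.uIcc (0:ℝ) τ,
      HasDerivAt (fun t => ((ρ t * matLog στ).trace).re)
        (((ρ' t * matLog στ).trace).re) t := by
    intro t ht
    rw [Set.uIcc_of_le hτ.le] at ht
    exact Lc.hasFDerivAt.comp_hasDerivAt t (hderiv t ht)
  have hcont' : ContinuousOn (fun t => ((ρ' t * matLog στ).trace).re)
      (Set.uIcc (0:ℝ) τ) := by
    rw [Set.uIcc_of_le hτ.le]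
    exact Lc.continuous.comp_continuousOn hcont
  have hint : IntervalIntegrable (fun t => ((ρ' t * matLog στ).trace).re) volume 0 τ :=
    hcont'.intervalIntegrable
  have hftc : ∫ t in (0:ℝ)..τ, ((ρ' t * matLog στ).trace).re
      = ((ρ τ * matLog στ).trace).re - ((ρ 0 * matLog στ).trace).re :=
    intervalIntegral.integral_eq_sub_of_hasDerivAt key hint
  have habs : ((ρ τ * matLog στ).trace).re - ((ρ 0 * matLog στ).trace).re
      ≤ ∫ t in (0:ℝ)..τ, |((ρ' t * matLog στ).trace).re| := by
    rw [← hftc]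
    calc ∫ t in (0:ℝ)..τ, ((ρ' t * matLog στ).trace).re
        ≤ |∫ t in (0:ℝ)..τ, ((ρ' t * matLog στ).trace).re| := le_abs_self _
      _ ≤ ∫ t in (0:ℝ)..τ, |((ρ' t * matLog στ).trace).re| :=
          intervalIntegral.abs_integral_le_integral_abs hτ.le
  have hX : |ΔM + ΔS| ≤ ((ρ τ * matLog στ).trace).re - ((ρ 0 * matLog στ).trace).re := by
    rw [abs_of_nonpos hneg, hΔM, hΔS, h1]
    have e1 := hsplit (ρ τ) στ
    have e2 := hsplit (ρ 0) στ
    linarith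
  refine ⟨hX.trans habs, ?_⟩
  have hI0 : 0 ≤ ∫ t in (0:ℝ)..τ, |((ρ' t * matLog στ).trace).re| :=
    intervalIntegral.integral_nonneg hτ.le (fun u _ => abs_nonneg _)
  have hXI := hX.trans habs
  rcases eq_or_lt_of_le hI0 with h | h
  · have hz : |ΔM + ΔS| = 0 := by
      rw [← h] at hXI
      exact le_antisymm hXI (abs_nonneg _)
    rw [hz]
    simpa using hτ.le
  · have hc : 0 < (1/τ) * ∫ t in (0:ℝ)..τ, |((ρ' t * matLog στ).trace).re| :=
      mul_pos (by positivity) h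
    rw [ge_iff_le, div_le_iff₀ hc]
    calc |ΔM + ΔS| ≤ ∫ t in (0:ℝ)..τ, |((ρ' t * matLog στ).trace).re| := hXI
      _ = τ * ((1/τ) * ∫ t in (0:ℝ)..τ, |((ρ' t * matLog στ).trace).re|) := by
          field_simp
end

section
/- (Resource generation bound.) Let n ≥ 1, let τ > 0, let ρ : [0,τ] → Mₙ(ℂ) be a continuously differentiable family of positive definite density matrices with derivative ρ̇ₜ, let σ be a positive definite density matrix, and suppose ρ₀ = σ. Set ΔS := S(ρ_τ) − S(ρ₀). Then |S(ρ_τ‖σ) + ΔS| ≤ ∫₀^τ |Tr[ρ̇ₜ · log σ]| dt; equivalently τ ≥ T_g(σ,ρ_τ) := |S(ρ_τ‖σ) + ΔS| / ⟨|Tr[ρ̇ₜ log σ]|⟩ₜ, where ⟨f⟩ₜ := (1/τ)∫₀^τ f(t) dt. -/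
open Matrix MeasureTheory intervalIntegral Filter
open scoped ComplexOrder

attribute [local instance] Matrix.normedAddCommGroup Matrix.normedSpace

/-- The real-linear map `A ↦ Re Tr[A * L]`. -/
noncomputable def traceMulRe {n : ℕ} (L : Matrix (Fin n) (Fin n) ℂ) :
    Matrix (Fin n) (Fin n) ℂ →ₗ[ℝ] ℝ where
  toFun A := ((A * L).trace).re
  map_add' A B := by simp [add_mul]
  map_smul' r A := by
    simp [Matrix.smul_mul, Complex.real_smul]

/-- **Corollary 2 of the paper (resource generation bound).** For a C¹ family `ρₜ`
of positive definite density matrices starting from the free state `σ = ρ₀`: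
`|S(ρ_τ‖σ) + ΔS| ≤ ∫₀^τ |Tr[ρ̇ₜ log σ]| dt`, i.e. `τ ≥ T_g(σ, ρ_τ)`. -/
theorem resource_generation_bound
    {n : ℕ} (hn : 1 ≤ n) {τ : ℝ} (hτ : 0 < τ)
    (ρ ρ' : ℝ → Matrix (Fin n) (Fin n) ℂ)
    (hρ : ∀ t ∈ Set.Icc (0 : ℝ) τ, IsPDDensity (ρ t))
    (hderiv : ∀ t ∈ Set.Icc (0 : ℝ) τ, HasDerivAt ρ (ρ' t) t)
    (hcont : ContinuousOn ρ' (Set.Icc (0 : ℝ) τ))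
    (σ : Matrix (Fin n) (Fin n) ℂ) (hσ : IsPDDensity σ) (hρ0 : ρ 0 = σ)
    (ΔS : ℝ) (hΔS : ΔS = vnEnt (ρ τ) - vnEnt (ρ 0)) :
    |relEnt (ρ τ) σ + ΔS| ≤ (∫ t in (0 : ℝ)..τ, |((ρ' t * matLog σ).trace).re|) ∧
    τ ≥ |relEnt (ρ τ) σ + ΔS| /
        ((1 / τ) * ∫ t in (0 : ℝ)..τ, |((ρ' t * matLog σ).trace).re|) := by
  classical
  set L := matLog σ with hL
  let F : Matrix (Fin n) (Fin n) ℂ →L[ℝ] ℝ := LinearMap.toContinuousLinearMap (traceMulRe L)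
  have hFdef : ∀ A, F A = ((A * L).trace).re := fun A => rfl
  have hderivF : ∀ t ∈ Set.uIcc (0 : ℝ) τ,
      HasDerivAt (fun t => F (ρ t)) (F (ρ' t)) t := by
    intro t ht
    rw [Set.uIcc_of_le hτ.le] at ht
    exact (F.hasFDerivAt.comp_hasDerivAt t (hderiv t ht))
  have hcont' : ContinuousOn (fun t => ((ρ' t * L).trace).re) (Set.Icc (0 : ℝ) τ) :=
    F.continuous.comp_continuousOn hcont
  have hInt : IntervalIntegrable (fun t => ((ρ' t * L).trace).re) volume 0 τ :=
    (hcont'.mono (by rw [Set.uIcc_of_le hτ.le])).intervalIntegrable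
  have hFTC : (∫ t in (0 : ℝ)..τ, ((ρ' t * L).trace).re)
      = F (ρ τ) - F (ρ 0) :=
    intervalIntegral.integral_eq_sub_of_hasDerivAt hderivF hInt
  have hkey : relEnt (ρ τ) σ + ΔS = -(∫ t in (0 : ℝ)..τ, ((ρ' t * L).trace).re) := by
    rw [hFTC, hΔS, hρ0]
    simp only [relEnt, vnEnt, hFdef, mul_sub, Matrix.trace_sub, Complex.sub_re, hL]
    ring
  have habs : |∫ t in (0 : ℝ)..τ, ((ρ' t * L).trace).re|
      ≤ ∫ t in (0 : ℝ)..τ, |((ρ' t * L).trace).re| :=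
    intervalIntegral.abs_integral_le_integral_abs hτ.le
  have h1 : |relEnt (ρ τ) σ + ΔS| ≤ ∫ t in (0 : ℝ)..τ, |((ρ' t * L).trace).re| := by
    rw [hkey, abs_neg]; exact habs
  refine ⟨h1, ?_⟩
  set I := ∫ t in (0 : ℝ)..τ, |((ρ' t * L).trace).re| with hI
  have hI0 : 0 ≤ I := by
    apply intervalIntegral.integral_nonneg hτ.le
    intro t _; exact abs_nonneg _
  rcases eq_or_lt_of_le hI0 with h0 | hpos
  · have : |relEnt (ρ τ) σ + ΔS| = 0 := le_antisymm (by rw [← h0] at h1; exact h1) (abs_nonneg _)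
    rw [this, zero_div]
    exact hτ.le
  · rw [ge_iff_le, div_le_iff₀ (by positivity)]
    calc |relEnt (ρ τ) σ + ΔS| ≤ I := h1
      _ = τ * (1 / τ * I) := by field_simp
end

section
/- (Resource degradation bound.) Let n ≥ 1, let τ > 0, let ρ : [0,τ] → Mₙ(ℂ) be a continuously differentiable family of positive definite density matrices with derivative ρ̇ₜ, let σ be a positive definite density matrix, and suppose ρ_τ = σ. Set ΔS := S(ρ_τ) − S(ρ₀). Then |S(ρ₀‖σ) − ΔS| ≤ ∫₀^τ |Tr[ρ̇ₜ · log σ]| dt; equivalently τ ≥ T_d(ρ₀,σ) := |S(ρ₀‖σ) − ΔS| / ⟨|Tr[ρ̇ₜ log σ]|⟩ₜ, where ⟨f⟩ₜ := (1/τ)∫₀^τ f(t) dt. -/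
open Matrix MeasureTheory intervalIntegral Filter
open scoped ComplexOrder

attribute [local instance] Matrix.normedAddCommGroup Matrix.normedSpace

/-- The real-linear continuous map `A ↦ Re Tr (A * M)`. -/
noncomputable def trL {n : ℕ} (M : Matrix (Fin n) (Fin n) ℂ) :
    Matrix (Fin n) (Fin n) ℂ →L[ℝ] ℝ :=
  LinearMap.toContinuousLinearMap
    (Complex.reLm.comp
      (((Matrix.traceLinearMap (Fin n) ℂ ℂ).restrictScalars ℝ).comp
        ((LinearMap.mulRight ℂ M).restrictScalars ℝ)))

lemma trL_apply {n : ℕ} (M A : Matrix (Fin n) (Fin n) ℂ) :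
    trL M A = ((A * M).trace).re := rfl

/-- **Corollary 3 of the paper (resource degradation bound).** For a C¹ family `ρₜ`
of positive definite density matrices ending in the free state `σ = ρ_τ`:
`|S(ρ₀‖σ) - ΔS| ≤ ∫₀^τ |Tr[ρ̇ₜ log σ]| dt`, i.e. `τ ≥ T_d(ρ₀, σ)`. -/
theorem resource_degradation_bound
    {n : ℕ} (hn : 1 ≤ n) {τ : ℝ} (hτ : 0 < τ)
    (ρ ρ' : ℝ → Matrix (Fin n) (Fin n) ℂ)
    (hρ : ∀ t ∈ Set.Icc (0 : ℝ) τ, IsPDDensity (ρ t))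
    (hderiv : ∀ t ∈ Set.Icc (0 : ℝ) τ, HasDerivAt ρ (ρ' t) t)
    (hcont : ContinuousOn ρ' (Set.Icc (0 : ℝ) τ))
    (σ : Matrix (Fin n) (Fin n) ℂ) (hσ : IsPDDensity σ) (hρτ : ρ τ = σ)
    (ΔS : ℝ) (hΔS : ΔS = vnEnt (ρ τ) - vnEnt (ρ 0)) :
    |relEnt (ρ 0) σ - ΔS| ≤ (∫ t in (0 : ℝ)..τ, |((ρ' t * matLog σ).trace).re|) ∧
    τ ≥ |relEnt (ρ 0) σ - ΔS| /
        ((1 / τ) * ∫ t in (0 : ℝ)..τ, |((ρ' t * matLog σ).trace).re|) := by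
  have h0τ : (0 : ℝ) ≤ τ := hτ.le
  set M := matLog σ with hM
  set f : ℝ → ℝ := fun t => ((ρ' t * M).trace).re with hf
  set g : ℝ → ℝ := fun t => ((ρ t * M).trace).re with hg
  have hgderiv : ∀ t ∈ Set.uIcc (0 : ℝ) τ, HasDerivAt g (f t) t := by
    intro t ht
    rw [Set.uIcc_of_le h0τ] at ht
    exact (trL M).hasFDerivAt.comp_hasDerivAt t (hderiv t ht)
  have hfc : ContinuousOn f (Set.uIcc (0 : ℝ) τ) := by
    rw [Set.uIcc_of_le h0τ]
    exact (trL M).continuous.comp_continuousOn hcont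
  have hfi : IntervalIntegrable f volume 0 τ := hfc.intervalIntegrable
  have key : ∫ t in (0 : ℝ)..τ, f t = g τ - g 0 :=
    intervalIntegral.integral_eq_sub_of_hasDerivAt hgderiv hfi
  have habs : |g τ - g 0| ≤ ∫ t in (0 : ℝ)..τ, |f t| := by
    rw [← key]
    exact intervalIntegral.abs_integral_le_integral_abs h0τ
  have hid : relEnt (ρ 0) σ - ΔS = g τ - g 0 := by
    subst hΔS
    simp only [relEnt, vnEnt, hg, hρτ, ← hM, Matrix.mul_sub, Matrix.trace_sub,
      Complex.sub_re]
    ring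
  have h1 : |relEnt (ρ 0) σ - ΔS| ≤ ∫ t in (0 : ℝ)..τ, |f t| := hid ▸ habs
  refine ⟨h1, ?_⟩
  set I := ∫ t in (0 : ℝ)..τ, |f t| with hI
  have hInn : 0 ≤ I := intervalIntegral.integral_nonneg h0τ (fun _ _ => abs_nonneg _)
  rcases eq_or_lt_of_le hInn with h | h
  · rw [ge_iff_le, ← h, mul_zero, div_zero]
    exact h0τ
  · rw [ge_iff_le, div_le_iff₀ (by positivity)]
    calc |relEnt (ρ 0) σ - ΔS| ≤ I := h1
      _ = τ * ((1 / τ) * I) := by field_simp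
end

section
/- (Quantum speed limit from relative entropy.) Let n ≥ 1, let τ > 0, and let ρ : [0,τ] → Mₙ(ℂ) be a continuously differentiable family of positive definite density matrices with derivative ρ̇ₜ. Set ΔS := S(ρ_τ) − S(ρ₀). Then both |S(ρ₀‖ρ_τ) − ΔS| ≤ ∫₀^τ |Tr[ρ̇ₜ · log ρ_τ]| dt and |S(ρ_τ‖ρ₀) + ΔS| ≤ ∫₀^τ |Tr[ρ̇ₜ · log ρ₀]| dt hold; consequently τ ≥ max{T(ρ₀,ρ_τ), T(ρ_τ,ρ₀)}, where T(ϱ,ς) := |S(ϱ‖ς) − (S(ς) − S(ϱ))| / ⟨|Tr[ρ̇ₜ log ς]|⟩ₜ and ⟨f⟩ₜ := (1/τ)∫₀^τ f(t) dt. -/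
open Matrix MeasureTheory intervalIntegral Filter
open scoped ComplexOrder

attribute [local instance] Matrix.normedAddCommGroup Matrix.normedSpace

noncomputable def traceMulLin {n : ℕ} (L : Matrix (Fin n) (Fin n) ℂ) :
    Matrix (Fin n) (Fin n) ℂ →ₗ[ℝ] ℝ where
  toFun A := ((A * L).trace).re
  map_add' A B := by simp [add_mul]
  map_smul' c A := by simp [smul_mul_assoc]

theorem key_ftc_bound {n : ℕ} {τ : ℝ} (hτ : 0 < τ)
    (ρ ρ' : ℝ → Matrix (Fin n) (Fin n) ℂ)
    (hderiv : ∀ t ∈ Set.Icc (0 : ℝ) τ, HasDerivAt ρ (ρ' t) t)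
    (hcont : ContinuousOn ρ' (Set.Icc (0 : ℝ) τ))
    (L : Matrix (Fin n) (Fin n) ℂ) :
    |((ρ τ * L).trace).re - ((ρ 0 * L).trace).re| ≤
      ∫ t in (0:ℝ)..τ, |((ρ' t * L).trace).re| := by
  set f : Matrix (Fin n) (Fin n) ℂ →L[ℝ] ℝ :=
    LinearMap.toContinuousLinearMap (traceMulLin L)
  have hd : ∀ t ∈ Set.uIcc (0:ℝ) τ, HasDerivAt (fun t => f (ρ t)) (f (ρ' t)) t := by
    intro t ht
    rw [Set.uIcc_of_le hτ.le] at ht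
    exact (f.hasFDerivAt.comp_hasDerivAt t (hderiv t ht))
  have hci : IntervalIntegrable (fun t => f (ρ' t)) volume 0 τ := by
    apply ContinuousOn.intervalIntegrable
    rw [Set.uIcc_of_le hτ.le]
    exact f.continuous.comp_continuousOn hcont
  have heq := intervalIntegral.integral_eq_sub_of_hasDerivAt hd hci
  have h2 : |∫ t in (0:ℝ)..τ, f (ρ' t)| ≤ ∫ t in (0:ℝ)..τ, |f (ρ' t)| :=
    intervalIntegral.abs_integral_le_integral_abs hτ.le
  rw [heq] at h2
  simpa [f, traceMulLin] using h2

theorem aux_div_le {X I τ : ℝ} (hτ : 0 < τ) (hX : 0 ≤ X) (hXI : X ≤ I) :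
    X / ((1 / τ) * I) ≤ τ := by
  rcases (hX.trans hXI).eq_or_lt with h | h
  · simp [← h, hτ.le]
  · rw [div_le_iff₀ (by positivity)]
    calc X ≤ I := hXI
      _ = τ * (1 / τ * I) := by field_simp

/-- **Corollary 4 of the paper (quantum speed limit from relative entropy).** For a
C¹ family `ρₜ` of positive definite density matrices, both
`|S(ρ₀‖ρ_τ) - ΔS| ≤ ∫₀^τ |Tr[ρ̇ₜ log ρ_τ]| dt` and
`|S(ρ_τ‖ρ₀) + ΔS| ≤ ∫₀^τ |Tr[ρ̇ₜ log ρ₀]| dt` hold; consequently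
`τ ≥ max {T(ρ₀,ρ_τ), T(ρ_τ,ρ₀)}` with
`T(ϱ,ς) = |S(ϱ‖ς) - (S(ς) - S(ϱ))| / ⟨|Tr[ρ̇ₜ log ς]|⟩ₜ`. -/
theorem quantum_speed_limit_relative_entropy
    {n : ℕ} (hn : 1 ≤ n) {τ : ℝ} (hτ : 0 < τ)
    (ρ ρ' : ℝ → Matrix (Fin n) (Fin n) ℂ)
    (hρ : ∀ t ∈ Set.Icc (0 : ℝ) τ, IsPDDensity (ρ t))
    (hderiv : ∀ t ∈ Set.Icc (0 : ℝ) τ, HasDerivAt ρ (ρ' t) t)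
    (hcont : ContinuousOn ρ' (Set.Icc (0 : ℝ) τ))
    (ΔS : ℝ) (hΔS : ΔS = vnEnt (ρ τ) - vnEnt (ρ 0)) :
    |relEnt (ρ 0) (ρ τ) - ΔS| ≤
      (∫ t in (0 : ℝ)..τ, |((ρ' t * matLog (ρ τ)).trace).re|) ∧
    |relEnt (ρ τ) (ρ 0) + ΔS| ≤
      (∫ t in (0 : ℝ)..τ, |((ρ' t * matLog (ρ 0)).trace).re|) ∧
    τ ≥ max
      (|relEnt (ρ 0) (ρ τ) - (vnEnt (ρ τ) - vnEnt (ρ 0))| /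
        ((1 / τ) * ∫ t in (0 : ℝ)..τ, |((ρ' t * matLog (ρ τ)).trace).re|))
      (|relEnt (ρ τ) (ρ 0) - (vnEnt (ρ 0) - vnEnt (ρ τ))| /
        ((1 / τ) * ∫ t in (0 : ℝ)..τ, |((ρ' t * matLog (ρ 0)).trace).re|)) := by
  
  have h1 : relEnt (ρ 0) (ρ τ) - ΔS =
      ((ρ τ * matLog (ρ τ)).trace).re - ((ρ 0 * matLog (ρ τ)).trace).re := by
    simp only [relEnt, vnEnt, hΔS, mul_sub, trace_sub, Complex.sub_re]
    ring
  have h2 : relEnt (ρ τ) (ρ 0) + ΔS =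
      -(((ρ τ * matLog (ρ 0)).trace).re - ((ρ 0 * matLog (ρ 0)).trace).re) := by
    simp only [relEnt, vnEnt, hΔS, mul_sub, trace_sub, Complex.sub_re]
    ring
  have b1 := key_ftc_bound hτ ρ ρ' hderiv hcont (matLog (ρ τ))
  have b2 := key_ftc_bound hτ ρ ρ' hderiv hcont (matLog (ρ 0))
  have B1 : |relEnt (ρ 0) (ρ τ) - ΔS| ≤
      ∫ t in (0:ℝ)..τ, |((ρ' t * matLog (ρ τ)).trace).re| := by rw [h1]; exact b1
  have B2 : |relEnt (ρ τ) (ρ 0) + ΔS| ≤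
      ∫ t in (0:ℝ)..τ, |((ρ' t * matLog (ρ 0)).trace).re| := by
    rw [h2, abs_neg]; exact b2
  refine ⟨B1, B2, ?_⟩
  have e1 : relEnt (ρ 0) (ρ τ) - (vnEnt (ρ τ) - vnEnt (ρ 0)) = relEnt (ρ 0) (ρ τ) - ΔS := by
    rw [hΔS]
  have e2 : relEnt (ρ τ) (ρ 0) - (vnEnt (ρ 0) - vnEnt (ρ τ)) = relEnt (ρ τ) (ρ 0) + ΔS := by
    rw [hΔS]; ring
  rw [ge_iff_le, max_le_iff, e1, e2]
  exact ⟨aux_div_le hτ (abs_nonneg _) B1, aux_div_le hτ (abs_nonneg _) B2⟩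
end

section
/- (Key inequalities in the proof of Theorem 1.) Let n ≥ 1, let ρ₀ and ρ_τ be positive definite density matrices on ℂⁿ, let F be a nonempty compact set of positive definite density matrices, define M(ϱ) := min_{σ∈F} S(ϱ‖σ), and let σ₀^▼, σ_τ^▼ ∈ F attain this minimum for ρ₀ and ρ_τ respectively. Set ΔS := S(ρ_τ) − S(ρ₀). Then M(ρ₀) − M(ρ_τ) ≤ ΔS + Tr[(ρ_τ − ρ₀) · log σ_τ^▼] and M(ρ_τ) − M(ρ₀) ≤ −ΔS − Tr[(ρ_τ − ρ₀) · log σ₀^▼]. -/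
open Matrix MeasureTheory intervalIntegral Filter
open scoped ComplexOrder

attribute [local instance] Matrix.normedAddCommGroup Matrix.normedSpace

lemma relEnt_split {n : ℕ} (ρ σ : Matrix (Fin n) (Fin n) ℂ) :
    relEnt ρ σ = ((ρ * matLog ρ).trace).re - ((ρ * matLog σ).trace).re := by
  simp [relEnt, Matrix.mul_sub, Matrix.trace_sub]

lemma tr_sub_split {n : ℕ} (ρ ρ' L : Matrix (Fin n) (Fin n) ℂ) :
    (((ρ - ρ') * L).trace).re = ((ρ * L).trace).re - ((ρ' * L).trace).re := by
  simp [Matrix.sub_mul, Matrix.trace_sub]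

/-- **Key inequalities in the proof of Theorem 1 of the paper.** With `σ₀`, `στ`
the closest free states to `ρ₀`, `ρ_τ` (so `M(ρ₀) = S(ρ₀‖σ₀)` and
`M(ρ_τ) = S(ρ_τ‖στ)`), one has
`M(ρ₀) - M(ρ_τ) ≤ ΔS + Tr[(ρ_τ - ρ₀) log στ]` and
`M(ρ_τ) - M(ρ₀) ≤ -ΔS - Tr[(ρ_τ - ρ₀) log σ₀]`. -/
theorem key_inequalities_theorem_one
    {n : ℕ} (hn : 1 ≤ n)
    (ρ₀ ρτ : Matrix (Fin n) (Fin n) ℂ)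
    (hρ₀ : IsPDDensity ρ₀) (hρτ : IsPDDensity ρτ)
    (F : Set (Matrix (Fin n) (Fin n) ℂ))
    (hFne : F.Nonempty) (hFcpt : IsCompact F) (hF : ∀ σ ∈ F, IsPDDensity σ)
    (σ₀ στ : Matrix (Fin n) (Fin n) ℂ) (hσ₀F : σ₀ ∈ F) (hστF : στ ∈ F)
    (hσ₀min : ∀ σ ∈ F, relEnt ρ₀ σ₀ ≤ relEnt ρ₀ σ)
    (hστmin : ∀ σ ∈ F, relEnt ρτ στ ≤ relEnt ρτ σ)
    (ΔS : ℝ) (hΔS : ΔS = vnEnt ρτ - vnEnt ρ₀) :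
    relEnt ρ₀ σ₀ - relEnt ρτ στ ≤ ΔS + (((ρτ - ρ₀) * matLog στ).trace).re ∧
    relEnt ρτ στ - relEnt ρ₀ σ₀ ≤ -ΔS - (((ρτ - ρ₀) * matLog σ₀).trace).re := by
  have h1 := hσ₀min στ hστF
  have h2 := hστmin σ₀ hσ₀F
  rw [relEnt_split, relEnt_split] at h1 h2 ⊢
  rw [tr_sub_split, tr_sub_split]
  simp only [vnEnt] at hΔS
  constructor <;> linarith
end

section
/- (Saturation of the resource speed limit under dephasing.) Fix p ∈ (0,1), γ > 0, τ > 0. Let ρₜ be the 4×4 matrix with diagonal entries (a, p/4, p/4, a) where a := p/4 + (1−p)/2, with (1,4) and (4,1) entries equal to e^{−γt}(1−p)/2, and all other entries 0; let σ_W be the diagonal matrix diag(a, p/4, p/4, a). Then (i) Tr[ρ̇ₜ · log σ_W] = 0 for all t ∈ [0,τ], and (ii) |S(ρ_τ‖σ_W) − S(ρ₀‖σ_W)| = ∫₀^τ |−Tr[ρ̇ₜ · log σ_W] − (d/dt)S(ρₜ)| dt; that is, the resource speed limit T_M(ρ₀,ρ_τ) of Theorem 1, evaluated with σ_W as the closest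 free state, equals the evolution time τ. -/
open Matrix MeasureTheory intervalIntegral Filter
open scoped ComplexOrder

attribute [local instance] Matrix.normedAddCommGroup Matrix.normedSpace

/-! ### Auxiliary lemmas -/

section Aux

set_option maxHeartbeats 1000000

lemma conj_isHermitian {n : ℕ} (W : Matrix (Fin n) (Fin n) ℂ) (d : Fin n → ℝ) :
    (W * Matrix.diagonal (fun i => (d i : ℂ)) * Wᴴ).IsHermitian := by
  unfold Matrix.IsHermitian
  simp only [conjTranspose_mul, diagonal_conjTranspose, conjTranspose_conjTranspose,
    ← mul_assoc]
  congr 2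
  ext i
  simp [Pi.star_def, Complex.conj_ofReal]

lemma conj_det_sub {n : ℕ} (V : Matrix (Fin n) (Fin n) ℂ) (v : Fin n → ℂ)
    (hV : V * star V = 1) (lam : ℂ) :
    (V * Matrix.diagonal v * star V - lam • 1).det = ∏ i, (v i - lam) := by
  have hdet : V.det * (star V).det = 1 := by rw [← det_mul, hV, det_one]
  have h1 : V * Matrix.diagonal v * star V - lam • 1
      = V * Matrix.diagonal (fun i => v i - lam) * star V := by
    have : Matrix.diagonal (fun i => v i - lam)
        = Matrix.diagonal v - lam • (1 : Matrix (Fin n) (Fin n) ℂ) := by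
      rw [Matrix.smul_one_eq_diagonal, Matrix.diagonal_sub]
    rw [this, Matrix.mul_sub, Matrix.sub_mul, Matrix.mul_smul, Matrix.smul_mul, mul_one, hV]
  rw [h1, det_mul, det_mul, det_diagonal, mul_comm, ← mul_assoc, mul_comm (star V).det,
    hdet, one_mul]

lemma eig_mem {n : ℕ} (W : Matrix (Fin n) (Fin n) ℂ)
    (hW : W ∈ Matrix.unitaryGroup (Fin n) ℂ) (d : Fin n → ℝ) (j : Fin n) :
    ∃ i, (conj_isHermitian W d).eigenvalues j = d i := by
  have hA := conj_isHermitian W d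
  set lam := hA.eigenvalues j with hlam
  set U : Matrix (Fin n) (Fin n) ℂ := (hA.eigenvectorUnitary : Matrix (Fin n) (Fin n) ℂ)
    with hUdef
  have hU : U * star U = 1 := (Matrix.mem_unitaryGroup_iff).mp hA.eigenvectorUnitary.2
  have hWu : W * star W = 1 := (Matrix.mem_unitaryGroup_iff).mp hW
  have hspec : W * Matrix.diagonal (fun i => (d i : ℂ)) * Wᴴ
      = U * Matrix.diagonal (RCLike.ofReal ∘ hA.eigenvalues) * star U := hA.spectral_theorem
  have h0 : (W * Matrix.diagonal (fun i => (d i : ℂ)) * Wᴴ - (lam : ℂ) • 1).det = 0 := by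
    rw [hspec, conj_det_sub U _ hU]
    exact Finset.prod_eq_zero (Finset.mem_univ j) (by simp [Function.comp, hlam])
  rw [← Matrix.star_eq_conjTranspose W, conj_det_sub W _ hWu] at h0
  obtain ⟨i, _, hi⟩ := Finset.prod_eq_zero_iff.mp h0
  exact ⟨i, by exact_mod_cast (sub_eq_zero.mp hi).symm⟩

lemma matLog_conj {n : ℕ} (W : Matrix (Fin n) (Fin n) ℂ)
    (hW : W ∈ Matrix.unitaryGroup (Fin n) ℂ) (d : Fin n → ℝ) (α β δ : ℝ)
    (hq : ∀ i, Real.log (d i) = α * (d i)^2 + β * d i + δ) :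
    matLog (W * Matrix.diagonal (fun i => (d i : ℂ)) * Wᴴ) =
      (α:ℂ) • ((W * Matrix.diagonal (fun i => (d i : ℂ)) * Wᴴ)^2)
      + (β:ℂ) • (W * Matrix.diagonal (fun i => (d i : ℂ)) * Wᴴ) + (δ:ℂ) • 1 := by
  have hA := conj_isHermitian W d
  rw [matLog, dif_pos hA]
  set U : Matrix (Fin n) (Fin n) ℂ := (hA.eigenvectorUnitary : Matrix (Fin n) (Fin n) ℂ)
    with hUdef
  have hU : U * star U = 1 := (Matrix.mem_unitaryGroup_iff).mp hA.eigenvectorUnitary.2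
  have hU' : star U * U = 1 := (Matrix.mem_unitaryGroup_iff').mp hA.eigenvectorUnitary.2
  have hspec : W * Matrix.diagonal (fun i => (d i : ℂ)) * Wᴴ
      = U * Matrix.diagonal (RCLike.ofReal ∘ hA.eigenvalues) * star U := hA.spectral_theorem
  have hfun : (fun j => (Real.log (hA.eigenvalues j) : ℂ))
      = fun j => (α:ℂ) * ((hA.eigenvalues j : ℂ))^2 + (β:ℂ) * (hA.eigenvalues j : ℂ) + (δ:ℂ) := by
    funext j
    obtain ⟨i, hi⟩ := eig_mem W hW d j
    rw [hi]
    exact_mod_cast congrArg (Complex.ofReal) (hq i)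
  have hdiag : Matrix.diagonal (fun j => (Real.log (hA.eigenvalues j) : ℂ))
      = (α:ℂ) • (Matrix.diagonal (RCLike.ofReal ∘ hA.eigenvalues))^2
        + (β:ℂ) • Matrix.diagonal (RCLike.ofReal ∘ hA.eigenvalues) + (δ:ℂ) • 1 := by
    rw [hfun, Matrix.diagonal_pow, Matrix.smul_one_eq_diagonal]
    ext i j
    rcases eq_or_ne i j with rfl | hij
    · simp [Matrix.diagonal_apply_eq, Function.comp, Pi.pow_apply]
    · simp [Matrix.diagonal_apply_ne _ hij, hij]
  set D := Matrix.diagonal (RCLike.ofReal ∘ hA.eigenvalues : Fin n → ℂ) with hD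
  have hsq : (U * D * star U)^2 = U * D^2 * star U := by
    rw [pow_two, pow_two]
    calc U * D * star U * (U * D * star U) = U * D * (star U * U) * D * star U := by
          simp only [Matrix.mul_assoc]
        _ = U * (D * D) * star U := by rw [hU']; simp only [Matrix.mul_one, Matrix.mul_assoc]
  calc (U * Matrix.diagonal fun i => ((Real.log (hA.eigenvalues i) : ℂ))) * Uᴴ
      = (α:ℂ) • (U * D * star U)^2 + (β:ℂ) • (U * D * star U) + (δ:ℂ) • 1 := by
        rw [hdiag, hsq, ← Matrix.star_eq_conjTranspose]
        rw [Matrix.mul_add, Matrix.mul_add, Matrix.add_mul, Matrix.add_mul]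
        simp only [Matrix.mul_smul, Matrix.smul_mul, Matrix.mul_one, hU, Matrix.mul_assoc]
    _ = _ := by rw [← hspec]

lemma conj_mul_conj {n : ℕ} (W X Y : Matrix (Fin n) (Fin n) ℂ) (hW' : Wᴴ * W = 1) :
    (W * X * Wᴴ) * (W * Y * Wᴴ) = W * (X * Y) * Wᴴ := by
  calc (W * X * Wᴴ) * (W * Y * Wᴴ) = W * X * (Wᴴ * W) * Y * Wᴴ := by
        simp only [Matrix.mul_assoc]
    _ = W * (X * Y) * Wᴴ := by rw [hW']; simp only [Matrix.mul_one, Matrix.mul_assoc]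

lemma trace_conj {n : ℕ} (W X : Matrix (Fin n) (Fin n) ℂ) (hW' : Wᴴ * W = 1) :
    (W * X * Wᴴ).trace = X.trace := by
  rw [Matrix.trace_mul_cycle, hW', Matrix.one_mul]

lemma trace_mul_matLog_self {n : ℕ} (W : Matrix (Fin n) (Fin n) ℂ)
    (hW : W ∈ Matrix.unitaryGroup (Fin n) ℂ) (d : Fin n → ℝ)
    (h : ∃ α β δ : ℝ, ∀ i, Real.log (d i) = α * (d i)^2 + β * d i + δ) :
    ((W * Matrix.diagonal (fun i => (d i : ℂ)) * Wᴴ)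
      * matLog (W * Matrix.diagonal (fun i => (d i : ℂ)) * Wᴴ)).trace
      = ((∑ i, d i * Real.log (d i) : ℝ) : ℂ) := by
  obtain ⟨α, β, δ, hq⟩ := h
  have hW' : Wᴴ * W = 1 := by
    rw [← Matrix.star_eq_conjTranspose]; exact (Matrix.mem_unitaryGroup_iff').mp hW
  rw [matLog_conj W hW d α β δ hq]
  set D := Matrix.diagonal (fun i => (d i : ℂ)) with hD
  have h2 : (W * D * Wᴴ)^2 = W * (D * D) * Wᴴ := by
    rw [pow_two]; exact conj_mul_conj W D D hW'
  have h3 : (W * D * Wᴴ) * (W * (D*D) * Wᴴ) = W * (D * (D * D)) * Wᴴ :=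
    conj_mul_conj W D (D*D) hW'
  have h2' : (W * D * Wᴴ) * (W * D * Wᴴ) = W * (D * D) * Wᴴ := conj_mul_conj W D D hW'
  rw [Matrix.mul_add, Matrix.mul_add, h2]
  simp only [Matrix.mul_smul, Matrix.mul_one, h3, h2']
  rw [Matrix.trace_add, Matrix.trace_add, Matrix.trace_smul, Matrix.trace_smul,
    Matrix.trace_smul, trace_conj W _ hW', trace_conj W _ hW', trace_conj W _ hW']
  rw [hD, Matrix.diagonal_mul_diagonal, Matrix.diagonal_mul_diagonal,
    Matrix.trace_diagonal, Matrix.trace_diagonal, Matrix.trace_diagonal]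
  have hre : ∑ i, d i * Real.log (d i)
      = α * (∑ i, (d i)^3) + β * (∑ i, (d i)^2) + δ * (∑ i, d i) := by
    rw [Finset.mul_sum, Finset.mul_sum, Finset.mul_sum, ← Finset.sum_add_distrib,
      ← Finset.sum_add_distrib]
    exact Finset.sum_congr rfl (fun i _ => by rw [hq i]; ring)
  rw [hre]
  push_cast
  simp only [smul_eq_mul, sq]
  ring_nf

lemma interp2 (x y u v : ℝ) (hxy : x ≠ y) :
    ∃ β δ : ℝ, (β * x + δ = u) ∧ (β * y + δ = v) := by
  refine ⟨(u - v) / (x - y), u - (u - v) / (x - y) * x, ?_, ?_⟩ <;>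
    · field_simp [sub_ne_zero.mpr hxy]
      try ring

lemma interp3 (x y z u v w : ℝ) (hxy : x ≠ y) (hxz : x ≠ z) (hyz : y ≠ z) :
    ∃ α β δ : ℝ, (α * x^2 + β * x + δ = u) ∧ (α * y^2 + β * y + δ = v)
      ∧ (α * z^2 + β * z + δ = w) := by
  have hxy' := sub_ne_zero.mpr hxy
  have hxz' := sub_ne_zero.mpr hxz
  have hyz' := sub_ne_zero.mpr hyz
  refine ⟨u / ((x-y)*(x-z)) + v / ((y-x)*(y-z)) + w / ((z-x)*(z-y)),
    -(u * (y+z) / ((x-y)*(x-z)) + v * (x+z) / ((y-x)*(y-z)) + w * (x+y) / ((z-x)*(z-y))),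
    u * (y*z) / ((x-y)*(x-z)) + v * (x*z) / ((y-x)*(y-z)) + w * (x*y) / ((z-x)*(z-y)),
    ?_, ?_, ?_⟩ <;>
  · field_simp [sub_ne_zero.mpr hxy.symm, sub_ne_zero.mpr hxz.symm, sub_ne_zero.mpr hyz.symm]
    ring

noncomputable def Wm : Matrix (Fin 4) (Fin 4) ℂ :=
  let s : ℂ := ((Real.sqrt 2)⁻¹ : ℝ)
  !![s, 0, 0, s; 0, 1, 0, 0; 0, 0, 1, 0; s, 0, 0, -s]

lemma hs2 : (((Real.sqrt 2 : ℝ) : ℂ))⁻¹ * (((Real.sqrt 2 : ℝ) : ℂ))⁻¹ = 1/2 := by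
  rw [← mul_inv, ← Complex.ofReal_mul, Real.mul_self_sqrt (by norm_num)]
  norm_num

lemma Wm_mem : Wm ∈ Matrix.unitaryGroup (Fin 4) ℂ := by
  rw [Matrix.mem_unitaryGroup_iff, Matrix.star_eq_conjTranspose]
  ext i j
  fin_cases i <;> fin_cases j <;>
    simp [Wm, Matrix.mul_apply, Fin.sum_univ_four, Matrix.one_apply,
      Complex.conj_ofReal] <;>
    linear_combination 2 * hs2

lemma rho_decomp (a cc p : ℝ) :
    (!![(a:ℂ), 0, 0, (cc:ℂ); 0, (p:ℂ)/4, 0, 0; 0, 0, (p:ℂ)/4, 0; (cc:ℂ), 0, 0, (a:ℂ)]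
      : Matrix (Fin 4) (Fin 4) ℂ)
    = Wm * Matrix.diagonal (fun i => ((![a + cc, p/4, p/4, a - cc] i : ℝ) : ℂ)) * Wmᴴ := by
  have hs2' : (((Real.sqrt 2 : ℝ) : ℂ))⁻¹ ^ 2 = 1/2 := by rw [sq]; exact hs2
  ext i j
  fin_cases i <;> fin_cases j <;>
    simp [Wm, Matrix.mul_apply, Fin.sum_univ_four, Matrix.vecMul_diagonal,
      Matrix.vecHead, Matrix.vecTail, Complex.conj_ofReal] <;>
    push_cast <;>
    ring_nf <;>
    simp [hs2'] <;>
    push_cast <;>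
    ring_nf

end Aux

/-- **Saturation of the resource speed limit under pure dephasing.** Let `ρₜ` be the
two-qubit Werner state `ρ_W(p)` dephased with factor `e^{-γt}` (in the computational
basis), and `σ_W` its dephasing (the closest separable/classical/incoherent state).
Then (i) `Tr[ρ̇ₜ log σ_W] = 0` for all `t ∈ [0,τ]`, and (ii)
`|S(ρ_τ‖σ_W) - S(ρ₀‖σ_W)| = ∫₀^τ |-Tr[ρ̇ₜ log σ_W] - Ṡ(ρₜ)| dt`; that is, the
resource speed limit `T_M(ρ₀,ρ_τ)` of Theorem 1 equals the evolution time `τ`. -/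
theorem dephasing_saturates_resource_speed_limit
    (p γ τ : ℝ) (hp : p ∈ Set.Ioo (0 : ℝ) 1) (hγ : 0 < γ) (hτ : 0 < τ)
    (a : ℝ) (ha : a = p / 4 + (1 - p) / 2)
    (c : ℝ → ℝ) (hc : c = fun t => Real.exp (-γ * t) * (1 - p) / 2)
    (ρ : ℝ → Matrix (Fin 4) (Fin 4) ℂ)
    (hρ : ρ = fun t =>
      !![(a : ℂ), 0, 0, (c t : ℂ);
         0, ((p : ℂ) / 4), 0, 0;
         0, 0, ((p : ℂ) / 4), 0;
         (c t : ℂ), 0, 0, (a : ℂ)])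
    (σW : Matrix (Fin 4) (Fin 4) ℂ)
    (hσW : σW = Matrix.diagonal ![(a : ℂ), (p : ℂ) / 4, (p : ℂ) / 4, (a : ℂ)]) :
    (∀ t ∈ Set.Icc (0 : ℝ) τ, (deriv ρ t * matLog σW).trace = 0) ∧
    |relEnt (ρ τ) σW - relEnt (ρ 0) σW| =
      ∫ t in (0 : ℝ)..τ,
        |(-((deriv ρ t * matLog σW).trace).re) - deriv (fun s => vnEnt (ρ s)) t| := by
  obtain ⟨hp0, hp1⟩ := hp
  -- basic positivity facts
  have hcpos : ∀ t, 0 < c t := by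
    intro t
    simp only [hc]
    have h1 := Real.exp_pos (-γ * t)
    have h2 : 0 < 1 - p := by linarith
    positivity
  have hapos : 0 < a := by rw [ha]; nlinarith
  have hq4 : (0:ℝ) < p/4 := by linarith
  have haq : p/4 < a := by rw [ha]; nlinarith
  have hcle : ∀ t, 0 ≤ t → c t ≤ (1 - p)/2 := by
    intro t ht; rw [hc]
    have h1 : Real.exp (-γ * t) ≤ 1 := by
      rw [Real.exp_le_one_iff]
      nlinarith
    nlinarith
  have hamc : ∀ t, 0 ≤ t → p/4 ≤ a - c t := by
    intro t ht
    have := hcle t ht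
    rw [ha]; linarith
  have hapc : ∀ t, p/4 < a + c t := by intro t; have := hcpos t; linarith
  -- the eigenvalue vector of ρ t
  set d : ℝ → Fin 4 → ℝ := fun t => ![a + c t, p/4, p/4, a - c t] with hd
  have hρW : ∀ t, ρ t = Wm * Matrix.diagonal (fun i => ((d t i : ℝ) : ℂ)) * Wmᴴ := by
    intro t
    rw [hρ]
    exact rho_decomp a (c t) p
  -- interpolation data for the eigenvalues of ρ t
  have hint : ∀ t, ∃ α β δ : ℝ, ∀ i,
      Real.log (d t i) = α * (d t i)^2 + β * (d t i) + δ := by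
    intro t
    rcases eq_or_ne t 0 with rfl | ht0
    · -- t = 0 : a - c 0 = p/4
      have hc0 : c 0 = (1 - p)/2 := by rw [hc]; simp
      have hac0 : a - c 0 = p/4 := by rw [hc0, ha]; ring
      obtain ⟨β, δ, h1, h2⟩ := interp2 (a + c 0) (p/4)
        (Real.log (a + c 0)) (Real.log (p/4)) (by have := hapc 0; linarith)
      refine ⟨0, β, δ, ?_⟩
      intro i
      fin_cases i <;> simp only [hd] <;> simp [hac0] <;> linarith [h1, h2]
    · -- t ≠ 0 : three distinct eigenvalues
      have hne1 : a + c t ≠ a - c t := by have := hcpos t; intro h; nlinarith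
      have hne2 : a + c t ≠ p/4 := by have := hapc t; linarith
      have hne3 : a - c t ≠ p/4 := by
        rw [hc, ha]
        intro h
        have hexp : Real.exp (-γ * t) = 1 := by nlinarith [Real.exp_pos (-γ * t)]
        rw [Real.exp_eq_one_iff] at hexp
        have : t = 0 := by
          rcases mul_eq_zero.mp hexp with h' | h'
          · exact absurd (neg_eq_zero.mp h') (ne_of_gt hγ)
          · exact h'
        exact ht0 this
      obtain ⟨α, β, δ, h1, h2, h3⟩ := interp3 (a + c t) (a - c t) (p/4)
        (Real.log (a + c t)) (Real.log (a - c t)) (Real.log (p/4)) hne1 hne2 hne3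
      exact ⟨α, β, δ, by intro i; fin_cases i <;> simp only [hd] <;> simp [h1, h2, h3]⟩
  -- entropy sum
  set G : ℝ → ℝ := fun t => (a + c t) * Real.log (a + c t)
      + p/4 * Real.log (p/4) + p/4 * Real.log (p/4)
      + (a - c t) * Real.log (a - c t) with hG
  have hGsum : ∀ t, (∑ i, d t i * Real.log (d t i)) = G t := by
    intro t
    rw [Fin.sum_univ_four]
    simp only [hd, hG]
    norm_num [Matrix.cons_val_zero, Matrix.cons_val_one, Matrix.vecHead, Matrix.vecTail]
    rfl
  have hGval : ∀ t, ((ρ t) * matLog (ρ t)).trace = ((G t : ℝ) : ℂ) := by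
    intro t
    rw [hρW t, trace_mul_matLog_self Wm Wm_mem (d t) (hint t), hGsum t]
  have hvn : ∀ t, vnEnt (ρ t) = -G t := by
    intro t
    rw [vnEnt, hGval t, Complex.ofReal_re]
  -- the logarithm of σW
  obtain ⟨βσ, δσ, hσ1, hσ2⟩ := interp2 a (p/4) (Real.log a) (Real.log (p/4))
    (by intro h; rw [h] at haq; exact lt_irrefl _ haq)
  have hσde : σW = (1 : Matrix (Fin 4) (Fin 4) ℂ)
      * Matrix.diagonal (fun i => ((![a, p/4, p/4, a] i : ℝ) : ℂ))
      * (1 : Matrix (Fin 4) (Fin 4) ℂ)ᴴ := by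
    rw [Matrix.conjTranspose_one, Matrix.mul_one, Matrix.one_mul, hσW]
    have hvec : (![(a:ℂ), (p:ℂ)/4, (p:ℂ)/4, (a:ℂ)] : Fin 4 → ℂ)
        = fun i => ((![a, p/4, p/4, a] i : ℝ) : ℂ) := by
      funext i
      fin_cases i <;> simp <;> push_cast <;> ring
    rw [hvec]
  have hqσ : ∀ i, Real.log (![a, p/4, p/4, a] i)
      = 0 * (![a, p/4, p/4, a] i)^2 + βσ * (![a, p/4, p/4, a] i) + δσ := by
    intro i
    fin_cases i <;> simp [hσ1, hσ2] <;> linarith [hσ1, hσ2]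
  have hlogσ : matLog σW = (βσ:ℂ) • σW + (δσ:ℂ) • 1 := by
    have := matLog_conj (1 : Matrix (Fin 4) (Fin 4) ℂ) (one_mem _)
      (![a, p/4, p/4, a]) 0 βσ δσ hqσ
    rw [← hσde] at this
    rw [this]
    push_cast
    rw [zero_smul, zero_add]
  -- derivative of ρ
  set B : Matrix (Fin 4) (Fin 4) ℂ :=
    !![0, 0, 0, 1; 0, 0, 0, 0; 0, 0, 0, 0; 1, 0, 0, 0] with hB
  set A0 : Matrix (Fin 4) (Fin 4) ℂ :=
    !![(a:ℂ), 0, 0, 0; 0, (p:ℂ)/4, 0, 0; 0, 0, (p:ℂ)/4, 0; 0, 0, 0, (a:ℂ)] with hA0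
  have hsplit : ρ = fun t => A0 + ((c t : ℝ) : ℂ) • B := by
    rw [hρ]
    funext t
    ext i j
    fin_cases i <;> fin_cases j <;> simp [hA0, hB, Matrix.vecHead, Matrix.vecTail]
  have hcd : ∀ t, HasDerivAt c (-γ * c t) t := by
    intro t
    rw [hc]
    have h1 : HasDerivAt (fun t : ℝ => -γ * t) (-γ) t := by
      simpa using (hasDerivAt_id t).const_mul (-γ)
    have h2 := (h1.exp).mul_const ((1 - p)/2)
    have h3 : (fun s => Real.exp (-γ * s) * (1 - p) / 2)
        = fun y => Real.exp (-γ * y) * ((1 - p) / 2) := by funext s; ring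
    rw [h3]
    exact h2.congr_deriv (by beta_reduce; ring)
  have hρd : ∀ t, HasDerivAt ρ (((-γ * c t : ℝ) : ℂ) • B) t := by
    intro t
    rw [hsplit]
    exact (((hcd t).ofReal_comp).smul_const B).const_add A0
  have hderiv_eq : ∀ t, deriv ρ t = ((-γ * c t : ℝ) : ℂ) • B := fun t => (hρd t).deriv
  -- part (i)
  have htr0 : ∀ t, (deriv ρ t * matLog σW).trace = 0 := by
    intro t
    rw [hderiv_eq t, hlogσ, Matrix.smul_mul, Matrix.mul_add, Matrix.mul_smul,
      Matrix.mul_smul, Matrix.mul_one]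
    have hBσ : (B * σW).trace = 0 := by
      rw [hσW, hB]
      simp [Matrix.trace, Matrix.diag, Matrix.mul_apply, Fin.sum_univ_four, Matrix.vecHead, Matrix.vecTail]
    have hBtr : B.trace = 0 := by
      rw [hB]; simp [Matrix.trace, Matrix.diag, Fin.sum_univ_four, Matrix.vecHead, Matrix.vecTail]
    rw [Matrix.trace_smul, Matrix.trace_add, Matrix.trace_smul, Matrix.trace_smul,
      hBσ, hBtr]
    simp
  refine ⟨fun t _ => htr0 t, ?_⟩
  -- relEnt difference
  have htrρσ : (ρ τ * matLog σW).trace = (ρ 0 * matLog σW).trace := by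
    have htrρ : ∀ t, (ρ t * σW).trace = (ρ 0 * σW).trace := by
      intro t
      rw [hρ, hσW]
      simp [Matrix.trace, Matrix.diag, Matrix.mul_apply, Fin.sum_univ_four, Matrix.vecHead, Matrix.vecTail]
    have htr : ∀ t, (ρ t).trace = (ρ 0).trace := by
      intro t
      rw [hρ]
      simp [Matrix.trace, Matrix.diag, Fin.sum_univ_four, Matrix.vecHead, Matrix.vecTail]
    rw [hlogσ]
    rw [Matrix.mul_add, Matrix.mul_smul, Matrix.mul_smul, Matrix.mul_one,
      Matrix.trace_add, Matrix.trace_smul, Matrix.trace_smul, htrρ τ, htr τ]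
    rw [Matrix.mul_add, Matrix.mul_smul, Matrix.mul_smul, Matrix.mul_one,
      Matrix.trace_add, Matrix.trace_smul, Matrix.trace_smul]
  have hrel : relEnt (ρ τ) σW - relEnt (ρ 0) σW = G τ - G 0 := by
    rw [relEnt, relEnt, Matrix.mul_sub, Matrix.mul_sub, Matrix.trace_sub,
      Matrix.trace_sub, hGval τ, hGval 0, htrρσ]
    simp [Complex.sub_re]
  rw [hrel]
  -- derivative of G
  set G' : ℝ → ℝ := fun t => (-γ * c t) * (Real.log (a + c t) - Real.log (a - c t))
    with hG'
  have hGd : ∀ t ∈ Set.uIcc (0:ℝ) τ, HasDerivAt G (G' t) t := by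
    intro t ht
    rw [Set.uIcc_of_le (le_of_lt hτ)] at ht
    have ht0 : 0 ≤ t := ht.1
    have hpos1 : a + c t ≠ 0 := (hq4.trans (hapc t)).ne'
    have hpos2 : a - c t ≠ 0 := (lt_of_lt_of_le hq4 (hamc t ht0)).ne'
    have h1 : HasDerivAt (fun s => a + c s) (-γ * c t) t := (hcd t).const_add a
    have h2 : HasDerivAt (fun s => a - c s) (-(-γ * c t)) t := (hcd t).const_sub a
    have hf1 : HasDerivAt (fun s : ℝ => (a + c s) * Real.log (a + c s))
        ((Real.log (a + c t) + 1) * (-γ * c t)) t :=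
      by have := (Real.hasDerivAt_mul_log hpos1).comp t h1; exact this
    have hf2 : HasDerivAt (fun s : ℝ => (a - c s) * Real.log (a - c s))
        ((Real.log (a - c t) + 1) * (-(-γ * c t))) t :=
      by have := (Real.hasDerivAt_mul_log hpos2).comp t h2; exact this
    have hsum := ((hf1.add_const (p/4 * Real.log (p/4))).add_const
      (p/4 * Real.log (p/4))).add hf2
    simp only [hG, hG']
    exact hsum.congr_deriv (by ring)
  have hG'cont : ContinuousOn G' (Set.uIcc (0:ℝ) τ) := by
    have hccont : Continuous c := by
      rw [hc]
      fun_prop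
    rw [Set.uIcc_of_le (le_of_lt hτ)]
    apply ContinuousOn.mul
    · exact (continuous_const.mul hccont).continuousOn
    · apply ContinuousOn.sub
      · apply ContinuousOn.log ((continuous_const.add hccont).continuousOn)
        intro x hx
        exact (hq4.trans (hapc x)).ne'
      · apply ContinuousOn.log ((continuous_const.sub hccont).continuousOn)
        intro x hx
        exact (lt_of_lt_of_le hq4 (hamc x hx.1)).ne'
  have hG'nonpos : ∀ t ∈ Set.uIcc (0:ℝ) τ, G' t ≤ 0 := by
    intro t ht
    rw [Set.uIcc_of_le (le_of_lt hτ)] at ht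
    rw [hG']
    have h1 : -γ * c t ≤ 0 := by have := hcpos t; nlinarith
    have h2 : 0 ≤ Real.log (a + c t) - Real.log (a - c t) := by
      have hle : a - c t ≤ a + c t := by have := hcpos t; linarith
      have hpos : 0 < a - c t := by have := hamc t ht.1; linarith
      have := Real.log_le_log hpos hle
      linarith
    exact mul_nonpos_of_nonpos_of_nonneg h1 h2
  -- rewrite the integrand
  have hinteq : ∀ t ∈ Set.uIcc (0:ℝ) τ,
      |(-((deriv ρ t * matLog σW).trace).re) - deriv (fun s => vnEnt (ρ s)) t|
        = -G' t := by
    intro t ht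
    have hfun : (fun s => vnEnt (ρ s)) = fun s => -G s := funext hvn
    rw [htr0 t, hfun]
    have := ((hGd t ht).neg).deriv
    rw [show (fun s => -G s) = -G from rfl, this]
    simp only [Complex.zero_re, neg_zero, zero_sub, neg_neg]
    exact abs_of_nonpos (hG'nonpos t ht)
  rw [intervalIntegral.integral_congr hinteq]
  have hFTC : ∫ t in (0:ℝ)..τ, -G' t = -G τ - (-G 0) := by
    apply intervalIntegral.integral_eq_sub_of_hasDerivAt
    · intro t ht
      exact (hGd t ht).neg
    · exact (hG'cont.neg).intervalIntegrable
  rw [hFTC]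
  have hnn : 0 ≤ -G τ - (-G 0) := by
    rw [← hFTC]
    apply intervalIntegral.integral_nonneg (le_of_lt hτ)
    intro u hu
    have : G' u ≤ 0 := hG'nonpos u (by rw [Set.uIcc_of_le (le_of_lt hτ)]; exact hu)
    linarith
  rw [abs_of_nonpos (by linarith : G τ - G 0 ≤ 0)]
  ring
end

section
/- (Saturation of the relative-entropy quantum speed limit under pure dephasing.) Fix p ∈ (0,1), γ > 0, τ > 0. Set a := p/4 + (1−p)/2, b := (1−p)/2, and define the probability vectors r(t) := (a + b e^{−γt}, a − b e^{−γt}, p/4, p/4) for t ∈ [0,τ]. Then |D(r(0)‖r(τ)) − (H(r(τ)) − H(r(0)))| = ∫₀^τ |Σᵢ ṙᵢ(t) log rᵢ(τ)| dt, where D(q‖s) := Σᵢ qᵢ(log qᵢ − log sᵢ) and H(q) := −Σᵢ qᵢ log qᵢ. Equivalently, the quantum speed limit T(ρ₀,ρ_τ) of Corollary 4 equals τ for the pure dephasing orbit of the Werner state. -/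
/-- Classical Kullback–Leibler divergence `D(q‖s) = ∑ᵢ qᵢ (log qᵢ - log sᵢ)`. -/
noncomputable def klDiv4 (q s : Fin 4 → ℝ) : ℝ :=
  ∑ i, q i * (Real.log (q i) - Real.log (s i))

/-- Shannon entropy `H(q) = -∑ᵢ qᵢ log qᵢ`. -/
noncomputable def shannonH4 (q : Fin 4 → ℝ) : ℝ :=
  -∑ i, q i * Real.log (q i)

/-- **Saturation of the relative-entropy quantum speed limit under pure dephasing.**
With `r(t) = (a + b e^{-γt}, a - b e^{-γt}, p/4, p/4)` the spectrum of the dephasing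
Werner state (`a = p/4 + (1-p)/2`, `b = (1-p)/2`),
`|D(r(0)‖r(τ)) - (H(r(τ)) - H(r(0)))| = ∫₀^τ |∑ᵢ ṙᵢ(t) log rᵢ(τ)| dt`;
equivalently, the quantum speed limit `T(ρ₀,ρ_τ)` of Corollary 4 equals `τ` on the
pure dephasing orbit. -/
theorem dephasing_saturates_quantum_speed_limit
    (p γ τ : ℝ) (hp : p ∈ Set.Ioo (0 : ℝ) 1) (hγ : 0 < γ) (hτ : 0 < τ)
    (a b : ℝ) (ha : a = p / 4 + (1 - p) / 2) (hb : b = (1 - p) / 2)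
    (r : ℝ → Fin 4 → ℝ)
    (hr : r = fun t => ![a + b * Real.exp (-γ * t), a - b * Real.exp (-γ * t),
      p / 4, p / 4]) :
    |klDiv4 (r 0) (r τ) - (shannonH4 (r τ) - shannonH4 (r 0))| =
      ∫ t in (0 : ℝ)..τ, |∑ i, deriv (fun s => r s i) t * Real.log (r τ i)| := by
  obtain ⟨hp0, hp1⟩ := hp
  subst hr
  set E := Real.exp (-γ * τ) with hE
  have hEpos : 0 < E := Real.exp_pos _
  have hE1 : E < 1 := by
    rw [hE, Real.exp_lt_one_iff]
    nlinarith
  have hb0 : 0 < b := by rw [hb]; linarith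
  have habE : 0 < a - b * E := by rw [ha, hb]; nlinarith
  have habE' : 0 < a + b * E := by nlinarith
  set L1 := Real.log (a + b * E) with hL1
  set L2 := Real.log (a - b * E) with hL2
  have hL : L2 ≤ L1 := Real.log_le_log habE (by nlinarith)
  -- derivative of exp(-γ s)
  have hexp : ∀ t : ℝ, HasDerivAt (fun s : ℝ => Real.exp (-γ * s))
      (-γ * Real.exp (-γ * t)) t := by
    intro t
    have h := (Real.hasDerivAt_exp (-γ * t)).comp t ((hasDerivAt_id t).const_mul (-γ))
    simpa [Function.comp_def, mul_comm] using h
  have d0 : ∀ t : ℝ, deriv (fun s => a + b * Real.exp (-γ * s)) t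
      = b * (-γ * Real.exp (-γ * t)) := fun t =>
    (((hexp t).const_mul b).const_add a).deriv
  have d1 : ∀ t : ℝ, deriv (fun s => a - b * Real.exp (-γ * s)) t
      = -(b * (-γ * Real.exp (-γ * t))) := fun t =>
    (((hexp t).const_mul b).const_sub a).deriv
  -- rewrite the integrand
  have hint : ∀ t : ℝ,
      |∑ i, deriv
        (fun s => (fun t => ![a + b * Real.exp (-γ * t), a - b * Real.exp (-γ * t),
          p / 4, p / 4] : ℝ → Fin 4 → ℝ) s i) t *
        Real.log ((![a + b * E, a - b * E, p / 4, p / 4] : Fin 4 → ℝ) i)|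
      = γ * b * (L1 - L2) * Real.exp (-γ * t) := by
    intro t
    have he : 0 < Real.exp (-γ * t) := Real.exp_pos _
    simp only [Fin.sum_univ_four, Matrix.cons_val_zero, Matrix.cons_val_one,
      Matrix.head_cons, Matrix.cons_val_two, Matrix.tail_cons, Matrix.cons_val_three,
      d0, d1, deriv_const]
    rw [← hL1, ← hL2]
    rw [abs_of_nonpos (by nlinarith [mul_nonneg (mul_nonneg (mul_nonneg hγ.le hb0.le) he.le) (sub_nonneg.mpr hL)])]
    ring
  have hintegrand :
      (fun t => |∑ i, deriv
        (fun s => (fun t => ![a + b * Real.exp (-γ * t), a - b * Real.exp (-γ * t),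
          p / 4, p / 4] : ℝ → Fin 4 → ℝ) s i) t *
        Real.log ((![a + b * E, a - b * E, p / 4, p / 4] : Fin 4 → ℝ) i)|)
      = fun t => γ * b * (L1 - L2) * Real.exp (-γ * t) := funext hint
  -- compute the integral
  have hF : ∀ t : ℝ, HasDerivAt (fun s => -(b * (L1 - L2) * Real.exp (-γ * s)))
      (γ * b * (L1 - L2) * Real.exp (-γ * t)) t := by
    intro t
    have h := ((hexp t).const_mul (b * (L1 - L2))).neg
    refine h.congr_deriv ?_
    ring
  have hInt : (∫ t in (0:ℝ)..τ, γ * b * (L1 - L2) * Real.exp (-γ * t))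
      = b * (L1 - L2) * (1 - E) := by
    rw [intervalIntegral.integral_eq_sub_of_hasDerivAt (fun t _ => hF t)
      ((continuous_const.mul (Real.continuous_exp.comp (continuous_const.mul continuous_id))).intervalIntegrable _ _)]
    simp [hE]
    ring
  -- now the LHS
  have hτE : (fun t : ℝ => ![a + b * Real.exp (-γ * t), a - b * Real.exp (-γ * t),
      p / 4, p / 4]) τ = ![a + b * E, a - b * E, p / 4, p / 4] := by
    rw [hE]
  have h0E : (fun t : ℝ => ![a + b * Real.exp (-γ * t), a - b * Real.exp (-γ * t),
      p / 4, p / 4]) 0 = ![a + b, a - b, p / 4, p / 4] := by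
    norm_num
  rw [hτE, h0E, hintegrand]
  have hlhs : klDiv4 ![a + b, a - b, p / 4, p / 4] ![a + b * E, a - b * E, p / 4, p / 4]
      - (shannonH4 ![a + b * E, a - b * E, p / 4, p / 4]
        - shannonH4 ![a + b, a - b, p / 4, p / 4])
      = b * (1 - E) * (L2 - L1) := by
    simp only [klDiv4, shannonH4, Fin.sum_univ_four, Matrix.cons_val_zero,
      Matrix.cons_val_one, Matrix.head_cons, Matrix.cons_val_two, Matrix.tail_cons,
      Matrix.cons_val_three, ← hL1, ← hL2]
    ring
  rw [hlhs, hInt, abs_of_nonpos (by nlinarith [mul_nonneg (mul_nonneg hb0.le (sub_nonneg.mpr hE1.le)) (sub_nonneg.mpr hL)])]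
  ring
end

section
/- (Saturation of the relative-entropy quantum speed limit under pure depolarisation.) Fix p₀ ∈ (0,1), γ > 0, τ > 0, and define p(t) := 1 − e^{−γt}(1 − p₀) and the probability vectors q(t) := (p(t)/4, p(t)/4, p(t)/4, 1 − 3p(t)/4) for t ∈ [0,τ]. Then |D(q(0)‖q(τ)) − (H(q(τ)) − H(q(0)))| = ∫₀^τ |Σᵢ q̇ᵢ(t) log qᵢ(τ)| dt, where D(q‖s) := Σᵢ qᵢ(log qᵢ − log sᵢ) and H(q) := −Σᵢ qᵢ log qᵢ. Equivalently, the quantum speed limit T(ρ₀,ρ_τ) of Corollary 4 equals τ for the pure depolarisation orbit of Werner states. -/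
/-- **Saturation of the relative-entropy quantum speed limit under pure
depolarisation.** With `p(t) = 1 - e^{-γt}(1 - p₀)` and
`q(t) = (p(t)/4, p(t)/4, p(t)/4, 1 - 3p(t)/4)` the spectrum of the depolarising
Werner state, `|D(q(0)‖q(τ)) - (H(q(τ)) - H(q(0)))| = ∫₀^τ |∑ᵢ q̇ᵢ(t) log qᵢ(τ)| dt`;
equivalently, the quantum speed limit `T(ρ₀,ρ_τ)` of Corollary 4 equals `τ` on the
pure depolarisation orbit of Werner states. -/
theorem depolarisation_saturates_quantum_speed_limit
    (p₀ γ τ : ℝ) (hp₀ : p₀ ∈ Set.Ioo (0 : ℝ) 1) (hγ : 0 < γ) (hτ : 0 < τ)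
    (p : ℝ → ℝ) (hp : p = fun t => 1 - Real.exp (-γ * t) * (1 - p₀))
    (q : ℝ → Fin 4 → ℝ)
    (hq : q = fun t => ![p t / 4, p t / 4, p t / 4, 1 - 3 * p t / 4]) :
    |klDiv4 (q 0) (q τ) - (shannonH4 (q τ) - shannonH4 (q 0))| =
      ∫ t in (0 : ℝ)..τ, |∑ i, deriv (fun s => q s i) t * Real.log (q τ i)| := by
  obtain ⟨hp0, hp1⟩ := hp₀
  set A : ℝ := 1 - p₀ with hA
  have hA0 : 0 < A := by simp [hA]; linarith
  have hEτ : Real.exp (-γ * τ) < 1 := by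
    rw [Real.exp_lt_one_iff]; nlinarith
  have hp0v : p 0 = p₀ := by rw [hp]; simp [hA]
  set c : ℝ := (3 / 4) * Real.log (p τ / 4) - (3 / 4) * Real.log (1 - 3 * p τ / 4)
    with hc
  -- the left-hand side
  have hLHS : klDiv4 (q 0) (q τ) - (shannonH4 (q τ) - shannonH4 (q 0))
      = (p τ - p 0) * c := by
    simp only [klDiv4, shannonH4, hq, Fin.sum_univ_four, Matrix.cons_val_zero,
      Matrix.cons_val_one, Matrix.head_cons, Matrix.cons_val_two, Matrix.tail_cons,
      Matrix.cons_val_three, hc]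
    ring
  -- derivative of p
  have hder : ∀ t : ℝ, HasDerivAt p (γ * Real.exp (-γ * t) * A) t := by
    intro t
    rw [hp]
    have h1 : HasDerivAt (fun s : ℝ => -γ * s) (-γ) t := by
      simpa using (hasDerivAt_id t).const_mul (-γ)
    have h3 := (h1.exp.mul_const A).const_sub 1
    exact h3.congr_deriv (by ring)
  -- the integrand
  have hint : ∀ t : ℝ, |∑ i, deriv (fun s => q s i) t * Real.log (q τ i)|
      = γ * Real.exp (-γ * t) * (A * |c|) := by
    intro t
    have hE : (0:ℝ) < Real.exp (-γ * t) := Real.exp_pos _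
    have d1 : deriv (fun s => p s / 4) t = γ * Real.exp (-γ * t) * A / 4 :=
      ((hder t).div_const 4).deriv
    have d3 : deriv (fun s => 1 - 3 * p s / 4) t
        = -(3 * (γ * Real.exp (-γ * t) * A) / 4) := by
      have h := ((((hder t).const_mul 3).div_const 4).const_sub 1)
      simpa using h.deriv
    simp only [hq, Fin.sum_univ_four, Matrix.cons_val_zero, Matrix.cons_val_one,
      Matrix.head_cons, Matrix.cons_val_two, Matrix.tail_cons, Matrix.cons_val_three]
    rw [d1, d3]
    have hrw : γ * Real.exp (-γ * t) * A / 4 * Real.log (p τ / 4)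
        + γ * Real.exp (-γ * t) * A / 4 * Real.log (p τ / 4)
        + γ * Real.exp (-γ * t) * A / 4 * Real.log (p τ / 4)
        + -(3 * (γ * Real.exp (-γ * t) * A) / 4) * Real.log (1 - 3 * p τ / 4)
        = (γ * Real.exp (-γ * t) * A) * c := by
      rw [hc]; ring
    rw [hrw, abs_mul, abs_of_pos (by positivity)]
    ring
  -- the integral via FTC
  have hFTC : (∫ t in (0 : ℝ)..τ, γ * Real.exp (-γ * t) * (A * |c|))
      = (1 - Real.exp (-γ * τ)) * (A * |c|) := by
    have hD : ∀ t ∈ Set.uIcc (0:ℝ) τ,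
        HasDerivAt (fun s => -Real.exp (-γ * s) * (A * |c|))
          (γ * Real.exp (-γ * t) * (A * |c|)) t := by
      intro t _
      have h1 : HasDerivAt (fun s : ℝ => -γ * s) (-γ) t := by
        simpa using (hasDerivAt_id t).const_mul (-γ)
      have h2 := (h1.exp.neg).mul_const (A * |c|)
      exact h2.congr_deriv (by ring)
    have hcont : IntervalIntegrable (fun t => γ * Real.exp (-γ * t) * (A * |c|))
        MeasureTheory.volume 0 τ := by
      apply Continuous.intervalIntegrable; fun_prop
    rw [intervalIntegral.integral_eq_sub_of_hasDerivAt hD hcont]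
    simp; ring
  rw [hLHS]
  have hdiff : p τ - p 0 = (1 - Real.exp (-γ * τ)) * A := by
    rw [hp0v, hp]; ring
  rw [intervalIntegral.integral_congr (fun t _ => hint t), hFTC, abs_mul, hdiff,
    abs_of_pos (by nlinarith)]
  ring
end
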